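/- Let (C, ◇, Tr) be a guarded traced category. For every f : ◇X × A → X × B set h = Tr^X_{A,X}(Δ_X ∘ π_ℓ ∘ f) : A → X. Then Tr^X_{A,B}(f) = π_r ∘ f ∘ (p_X × id_A) ∘ ⟨h, id_A⟩. -/

import Mathlib

open CategoryTheory CategoryTheory.Limits

universe v u

/-- A guarded trace operator: a family `Tr : Hom(◇X × A, X × B) → Hom(A, B)` satisfying
left/right tightening, sliding (together: naturality), vanishing (V1), (V2),
superposing (S) and yanking (Y). -/
structure IsGuardedTrace {C : Type u} [Category.{v} C] [HasFiniteProducts C]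
    (D : C ⥤ C) (p : 𝟭 C ⟶ D)
    (Tr : ∀ {X A B : C}, (D.obj X ⨯ A ⟶ X ⨯ B) → (A ⟶ B)) : Prop where
  left_tightening : ∀ {X A A' B : C} (f : D.obj X ⨯ A ⟶ X ⨯ B) (g : A' ⟶ A),
      Tr (prod.map (𝟙 (D.obj X)) g ≫ f) = g ≫ Tr f
  right_tightening : ∀ {X A B B' : C} (f : D.obj X ⨯ A ⟶ X ⨯ B) (g : B ⟶ B'),
      Tr (f ≫ prod.map (𝟙 X) g) = Tr f ≫ g
  sliding : ∀ {X X' A B : C} (f : D.obj X ⨯ A ⟶ X' ⨯ B) (g : X' ⟶ X),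
      Tr (f ≫ prod.map g (𝟙 B)) = Tr (prod.map (D.map g) (𝟙 A) ≫ f)
  vanishing₁ : ∀ {A B : C} (f : D.obj (⊤_ C) ⨯ A ⟶ (⊤_ C) ⨯ B),
      Tr f = prod.lift (terminal.from A ≫ p.app (⊤_ C)) (𝟙 A) ≫ f ≫ prod.snd
  vanishing₂ : ∀ {X Y A B : C} (f : D.obj X ⨯ (D.obj Y ⨯ A) ⟶ X ⨯ (Y ⨯ B)),
      Tr (Tr f) =
      Tr (prod.lift (prod.fst ≫ D.map prod.fst)
            (prod.lift (prod.fst ≫ D.map prod.snd) prod.snd) ≫ f ≫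
          prod.lift (prod.lift prod.fst (prod.snd ≫ prod.fst)) (prod.snd ≫ prod.snd))
  superposing : ∀ {X A B E : C} (f : D.obj X ⨯ A ⟶ X ⨯ B),
      Tr (prod.lift
            (prod.lift prod.fst (prod.snd ≫ prod.fst) ≫ f ≫ prod.fst)
            (prod.lift (prod.lift prod.fst (prod.snd ≫ prod.fst) ≫ f ≫ prod.snd)
              ((prod.snd : D.obj X ⨯ (A ⨯ E) ⟶ A ⨯ E) ≫ prod.snd))) =
        prod.map (Tr f) (𝟙 E)
  yanking : ∀ X : C,
      Tr (prod.lift prod.snd prod.fst : D.obj X ⨯ X ⟶ X ⨯ D.obj X) = p.app X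

attribute [local simp] prod.lift_fst prod.lift_snd prod.lift_fst_assoc prod.lift_snd_assoc

theorem IsGuardedTrace.trace_indep {C : Type u} [Category.{v} C] [HasFiniteProducts C]
    {D : C ⥤ C} {p : 𝟭 C ⟶ D}
    {Tr : ∀ {X A B : C}, (D.obj X ⨯ A ⟶ X ⨯ B) → (A ⟶ B)}
    (hTr : IsGuardedTrace D p @Tr)
    {X A B : C} (t : A ⟶ X) (s : D.obj X ⨯ A ⟶ B) :
    Tr (prod.lift (prod.snd ≫ t) s) =
      prod.lift t (𝟙 A) ≫ prod.map (p.app X) (𝟙 A) ≫ s := by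
  have hy := hTr.superposing (E := A)
    (prod.lift prod.snd prod.fst : D.obj X ⨯ X ⟶ X ⨯ D.obj X)
  rw [hTr.yanking] at hy
  have hS : (prod.lift
        (prod.lift prod.fst (prod.snd ≫ prod.fst) ≫
          (prod.lift prod.snd prod.fst : D.obj X ⨯ X ⟶ X ⨯ D.obj X) ≫ prod.fst)
        (prod.lift (prod.lift prod.fst (prod.snd ≫ prod.fst) ≫
          (prod.lift prod.snd prod.fst : D.obj X ⨯ X ⟶ X ⨯ D.obj X) ≫ prod.snd)
          ((prod.snd : D.obj X ⨯ (X ⨯ A) ⟶ X ⨯ A) ≫ prod.snd)))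
      = prod.lift (prod.snd ≫ prod.fst)
          (prod.lift prod.fst (prod.snd ≫ prod.snd)) := by
    ext <;> simp
  rw [hS] at hy
  have hk : prod.lift (prod.snd ≫ t) s
      = prod.map (𝟙 (D.obj X)) (prod.lift t (𝟙 A)) ≫
        (prod.lift (prod.snd ≫ prod.fst)
            (prod.lift prod.fst (prod.snd ≫ prod.snd)) ≫ prod.map (𝟙 X) s) := by
    rw [← Category.assoc]
    have h1 : prod.map (𝟙 (D.obj X)) (prod.lift t (𝟙 A)) ≫
        prod.lift (prod.snd ≫ prod.fst) (prod.lift prod.fst (prod.snd ≫ prod.snd))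
        = prod.lift (prod.snd ≫ t) (𝟙 (D.obj X ⨯ A)) := by
      ext <;> simp
    rw [h1]
    ext <;> simp
  rw [hk, hTr.left_tightening, hTr.right_tightening, hy]

theorem IsGuardedTrace.trace_dup {C : Type u} [Category.{v} C] [HasFiniteProducts C]
    {D : C ⥤ C} {p : 𝟭 C ⟶ D}
    {Tr : ∀ {X A B : C}, (D.obj X ⨯ A ⟶ X ⨯ B) → (A ⟶ B)}
    (hTr : IsGuardedTrace D p @Tr)
    {X A B : C} (f : D.obj X ⨯ A ⟶ X ⨯ B) :
    Tr (prod.lift (f ≫ prod.fst) (prod.lift (f ≫ prod.fst) prod.snd))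
      = prod.lift (Tr (f ≫ prod.fst ≫ prod.lift (𝟙 X) (𝟙 X))) (𝟙 A) := by
  have hy2 := hTr.superposing (E := A) (f ≫ prod.fst ≫ prod.lift (𝟙 X) (𝟙 X))
  have hS1 : (prod.lift
        (prod.lift prod.fst (prod.snd ≫ prod.fst) ≫
          (f ≫ prod.fst ≫ prod.lift (𝟙 X) (𝟙 X)) ≫ prod.fst)
        (prod.lift (prod.lift prod.fst (prod.snd ≫ prod.fst) ≫
          (f ≫ prod.fst ≫ prod.lift (𝟙 X) (𝟙 X)) ≫ prod.snd)
          ((prod.snd : D.obj X ⨯ (A ⨯ A) ⟶ A ⨯ A) ≫ prod.snd)))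
      = prod.lift (prod.lift prod.fst (prod.snd ≫ prod.fst) ≫ f ≫ prod.fst)
          (prod.lift (prod.lift prod.fst (prod.snd ≫ prod.fst) ≫ f ≫ prod.fst)
            (prod.snd ≫ prod.snd)) := by
    ext <;> simp
  rw [hS1] at hy2
  have hk2 : prod.lift (f ≫ prod.fst) (prod.lift (f ≫ prod.fst) prod.snd)
      = prod.map (𝟙 (D.obj X)) (prod.lift (𝟙 A) (𝟙 A)) ≫
          (prod.lift (prod.lift prod.fst (prod.snd ≫ prod.fst) ≫ f ≫ prod.fst)
            (prod.lift (prod.lift prod.fst (prod.snd ≫ prod.fst) ≫ f ≫ prod.fst)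
              (prod.snd ≫ prod.snd))) := by
    have hpre : prod.map (𝟙 (D.obj X)) (prod.lift (𝟙 A) (𝟙 A)) ≫
        prod.lift prod.fst (prod.snd ≫ prod.fst) = 𝟙 (D.obj X ⨯ A) := by
      ext <;> simp
    simp only [prod.comp_lift]
    simp only [← Category.assoc]
    rw [hpre]
    simp
  rw [hk2, hTr.left_tightening, hy2]
  ext <;> simp

set_option maxHeartbeats 1600000 in
/-- **Fixpoint identity for guarded traces.**  In a guarded traced category, for every
`f : ◇X × A ⟶ X × B`, setting `h = Tr (Δ_X ∘ π_ℓ ∘ f) : A ⟶ X` one has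
`Tr f = π_r ∘ f ∘ (p_X × id_A) ∘ ⟨h, id_A⟩`. -/
theorem guardedTrace_fixpoint
    {C : Type u} [Category.{v} C] [HasFiniteProducts C]
    (D : C ⥤ C) (p : 𝟭 C ⟶ D)
    (Tr : ∀ {X A B : C}, (D.obj X ⨯ A ⟶ X ⨯ B) → (A ⟶ B))
    (hTr : IsGuardedTrace D p @Tr) :
    ∀ {X A B : C} (f : D.obj X ⨯ A ⟶ X ⨯ B),
      Tr f =
        prod.lift (Tr (f ≫ prod.fst ≫ prod.lift (𝟙 X) (𝟙 X))) (𝟙 A) ≫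
          prod.map (p.app X) (𝟙 A) ≫ f ≫ prod.snd := by
  intro X A B f
  -- superposing the doubled morphism F'' with context E = D.obj X
  have hy3 := hTr.superposing (E := D.obj X)
    (prod.lift (f ≫ prod.fst) (prod.lift (f ≫ prod.fst) prod.snd))
  rw [hTr.trace_dup f] at hy3
  have hS2 : (prod.lift
        (prod.lift prod.fst (prod.snd ≫ prod.fst) ≫
          (prod.lift (f ≫ prod.fst) (prod.lift (f ≫ prod.fst) prod.snd)) ≫ prod.fst)
        (prod.lift (prod.lift prod.fst (prod.snd ≫ prod.fst) ≫
          (prod.lift (f ≫ prod.fst) (prod.lift (f ≫ prod.fst) prod.snd)) ≫ prod.snd)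
          ((prod.snd : D.obj X ⨯ (A ⨯ D.obj X) ⟶ A ⨯ D.obj X) ≫ prod.snd)))
      = prod.lift (prod.lift prod.fst (prod.snd ≫ prod.fst) ≫ f ≫ prod.fst)
          (prod.lift (prod.lift (prod.lift prod.fst (prod.snd ≫ prod.fst) ≫ f ≫ prod.fst)
              (prod.snd ≫ prod.fst))
            (prod.snd ≫ prod.snd)) := by
    simp only [prod.lift_fst, prod.lift_snd, prod.comp_lift, Category.assoc]
  rw [hS2] at hy3
  -- inner trace of k
  have hk3 : prod.lift (prod.lift prod.fst (prod.snd ≫ prod.snd) ≫ f ≫ prod.fst)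
      (prod.lift (prod.lift prod.fst (prod.snd ≫ prod.snd) ≫ f ≫ prod.fst)
        (prod.snd ≫ f ≫ prod.snd))
    = prod.map (𝟙 (D.obj X)) (prod.lift prod.snd prod.fst : D.obj X ⨯ A ⟶ A ⨯ D.obj X) ≫
      (prod.lift (prod.lift prod.fst (prod.snd ≫ prod.fst) ≫ f ≫ prod.fst)
        (prod.lift (prod.lift (prod.lift prod.fst (prod.snd ≫ prod.fst) ≫ f ≫ prod.fst)
            (prod.snd ≫ prod.fst))
          (prod.snd ≫ prod.snd)) ≫
       prod.map (𝟙 X) (prod.lift (prod.fst ≫ prod.fst)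
         (prod.lift prod.snd (prod.fst ≫ prod.snd) ≫ f ≫ prod.snd))) := by
    have hpre1 : prod.map (𝟙 (D.obj X)) (prod.lift prod.snd prod.fst : D.obj X ⨯ A ⟶ A ⨯ D.obj X) ≫
        prod.lift prod.fst (prod.snd ≫ prod.fst)
        = prod.lift prod.fst (prod.snd ≫ prod.snd) := by
      ext <;> simp
    have hpre2 : ∀ (g : D.obj X ⨯ (A ⨯ D.obj X) ⟶ X),
        (prod.map (𝟙 (D.obj X)) (prod.lift prod.snd prod.fst : D.obj X ⨯ A ⟶ A ⨯ D.obj X) ≫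
          prod.lift (prod.lift g (prod.snd ≫ prod.fst)) (prod.snd ≫ prod.snd)) ≫
          prod.lift prod.snd (prod.fst ≫ prod.snd) = prod.snd := by
      intro g; ext <;> simp
    ext <;> simp
    all_goals simp only [← Category.assoc]
    all_goals simp only [hpre1, hpre2]
  have hInner : Tr (prod.lift (prod.lift prod.fst (prod.snd ≫ prod.snd) ≫ f ≫ prod.fst)
      (prod.lift (prod.lift prod.fst (prod.snd ≫ prod.snd) ≫ f ≫ prod.fst)
        (prod.snd ≫ f ≫ prod.snd)))
      = prod.lift (prod.snd ≫ Tr (f ≫ prod.fst ≫ prod.lift (𝟙 X) (𝟙 X))) (f ≫ prod.snd) := by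
    rw [hk3, hTr.left_tightening, hTr.right_tightening, hy3]
    have hpre3 : ∀ (g : A ⟶ X),
        (prod.lift (prod.lift (prod.snd ≫ g) prod.snd) prod.fst :
            D.obj X ⨯ A ⟶ (X ⨯ A) ⨯ D.obj X) ≫
          prod.lift prod.snd (prod.fst ≫ prod.snd) = 𝟙 (D.obj X ⨯ A) := by
      intro g; ext <;> simp
    ext <;> simp
    all_goals simp only [← Category.assoc]
    all_goals simp only [hpre3, Category.id_comp]
  have houter := hTr.trace_indep (Tr (f ≫ prod.fst ≫ prod.lift (𝟙 X) (𝟙 X))) (f ≫ prod.snd)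
  have hv := hTr.vanishing₂ (X := X) (Y := X)
    (prod.lift (prod.lift prod.fst (prod.snd ≫ prod.snd) ≫ f ≫ prod.fst)
      (prod.lift (prod.lift prod.fst (prod.snd ≫ prod.snd) ≫ f ≫ prod.fst)
        (prod.snd ≫ f ≫ prod.snd)))
  rw [hInner, houter] at hv
  -- identify the doubled trace with Tr f via sliding along the diagonal
  have hc : (prod.lift (prod.fst ≫ D.map prod.fst)
        (prod.lift (prod.fst ≫ D.map prod.snd) prod.snd) ≫
      (prod.lift (prod.lift prod.fst (prod.snd ≫ prod.snd) ≫ f ≫ prod.fst)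
        (prod.lift (prod.lift prod.fst (prod.snd ≫ prod.snd) ≫ f ≫ prod.fst)
          (prod.snd ≫ f ≫ prod.snd))) ≫
      prod.lift (prod.lift prod.fst (prod.snd ≫ prod.fst)) (prod.snd ≫ prod.snd))
      = prod.lift (prod.map (D.map prod.fst) (𝟙 A) ≫ f ≫ prod.fst)
          (prod.map (D.map prod.snd) (𝟙 A) ≫ f ≫ prod.snd) ≫
        prod.map (prod.lift (𝟙 X) (𝟙 X)) (𝟙 B) := by
    have hpc1 : prod.lift (prod.fst ≫ D.map (prod.fst : X ⨯ X ⟶ X))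
          (prod.map (D.map (prod.snd : X ⨯ X ⟶ X)) (𝟙 A)) ≫
        prod.lift prod.fst (prod.snd ≫ prod.snd)
        = prod.map (D.map (prod.fst : X ⨯ X ⟶ X)) (𝟙 A) := by
      ext <;> simp
    have hpc2 : prod.lift (prod.fst ≫ D.map (prod.snd : X ⨯ X ⟶ X)) (prod.snd : D.obj (X ⨯ X) ⨯ A ⟶ A)
        = prod.map (D.map (prod.snd : X ⨯ X ⟶ X)) (𝟙 A) := by
      ext <;> simp
    ext <;> simp
    all_goals simp only [← Category.assoc]
    all_goals simp only [hpc1, hpc2]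
  rw [hc, hTr.sliding] at hv
  have hid : prod.map (D.map (prod.lift (𝟙 X) (𝟙 X))) (𝟙 A) ≫
      prod.lift (prod.map (D.map prod.fst) (𝟙 A) ≫ f ≫ prod.fst)
        (prod.map (D.map prod.snd) (𝟙 A) ≫ f ≫ prod.snd) = f := by
    have h1 : D.map (prod.lift (𝟙 X) (𝟙 X)) ≫ D.map prod.fst = 𝟙 (D.obj X) := by
      rw [← D.map_comp]; simp
    have h2 : D.map (prod.lift (𝟙 X) (𝟙 X)) ≫ D.map prod.snd = 𝟙 (D.obj X) := by
      rw [← D.map_comp]; simp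
    ext <;> simp
    all_goals simp only [h1, h2, prod.map_id_id, Category.id_comp]
  rw [hid] at hv
  exact hv.symm
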